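/- Let N be an even natural number. There is a bijection from Z¹_N, the set of partitions of N in which every odd part occurs an even number of times, onto BP^{N/2}_{1,1}, the set of bipartitions of N/2 of excess (1,1). The bijection replaces each maximal run (string) of equal parts 2a, 2a, …, 2a by a, a, …, a of the same length, and each maximal run 2a+1, 2a+1, …, 2a+1 (necessarily of even length) by a, a+1, a, a+1, …, a, a+1 of the same length. -/

import Mathlib

/-- A sequence of naturals that is eventually zero. -/
def EventuallyZero (l : ℕ → ℕ) : Prop := ∃ N, ∀ m, N ≤ m → l m = 0

/-- A bipartition: eventually zero, with `λ₁ ≥ λ₃ ≥ …` and `λ₂ ≥ λ₄ ≥ …`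
(0-indexed: `l i = λ_{i+1}`). -/
def IsBipartition (l : ℕ → ℕ) : Prop :=
  EventuallyZero l ∧ ∀ i, l (i + 2) ≤ l i

/-- A partition: eventually zero and weakly decreasing. -/
def IsPartitionSeq (l : ℕ → ℕ) : Prop :=
  EventuallyZero l ∧ ∀ i, l (i + 1) ≤ l i

/-- `λ` has excess `(e, e')`: `λᵢ + e ≥ λᵢ₊₁` for odd (paper) `i`,
`λᵢ + e' ≥ λᵢ₊₁` for even (paper) `i`.  With 0-based indices, paper-odd
positions are the even Lean indices. -/
def HasExcess (e e' : ℕ) (l : ℕ → ℕ) : Prop :=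
  ∀ i, (Even i → l (i + 1) ≤ l i + e) ∧ (Odd i → l (i + 1) ≤ l i + e')

/-- The (finite) sum of an eventually zero sequence is `n`. -/
def SumsTo (l : ℕ → ℕ) (n : ℕ) : Prop :=
  ∃ N, (∀ m, N ≤ m → l m = 0) ∧ ∑ i ∈ Finset.range N, l i = n

/-- Starting index of the maximal run (string) of entries equal to `ν i`. -/
noncomputable def strStart (ν : ℕ → ℕ) (i : ℕ) : ℕ := sInf {j | ν j = ν i}

/-- Length of the string of entries equal to `ν i`. -/
noncomputable def strLen (ν : ℕ → ℕ) (i : ℕ) : ℕ := {j | ν j = ν i}.ncard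

/-- Every odd part occurs an even number of times. -/
def OddPartsEvenMult (ν : ℕ → ℕ) : Prop := ∀ c, Odd c → Even ({i | ν i = c}.ncard)

/-- Every even positive part occurs an even number of times. -/
def EvenPartsEvenMult (ν : ℕ → ℕ) : Prop :=
  ∀ c, 0 < c → Even c → Even ({i | ν i = c}.ncard)


/-- The substitution of 3.4(a): each string 2a,...,2a becomes a,...,a; each string
2a+1,...,2a+1 (of even length) becomes a,a+1,a,a+1,.... -/
noncomputable def T2 (ν : ℕ → ℕ) : ℕ → ℕ := fun i =>
  if ν i = 0 then 0
  else if ν i % 2 = 0 then ν i / 2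
  else if (i - strStart ν i) % 2 = 0 then ν i / 2 else ν i / 2 + 1

namespace Zaux

/-- number of odd entries among the first i. -/
def Obits (ν : ℕ → ℕ) (i : ℕ) : ℕ :=
  ((Finset.range i).filter (fun j => Odd (ν j))).card

/-- the canonical form of T2. -/
def F (ν : ℕ → ℕ) (i : ℕ) : ℕ := ν i / 2 + ν i % 2 * (Obits ν i % 2)

lemma mono {ν : ℕ → ℕ} (hd : ∀ i, ν (i+1) ≤ ν i) : ∀ j k, j ≤ k → ν k ≤ ν j := by
  intro j k h
  induction k with
  | zero => simp_all
  | succ n ih =>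
    rcases Nat.lt_or_ge j (n+1) with h' | h'
    · exact le_trans (hd n) (ih (Nat.lt_succ_iff.mp h'))
    · have : j = n + 1 := le_antisymm h h'
      simp [this]

lemma Obits_succ (ν : ℕ → ℕ) (i : ℕ) :
    Obits ν (i+1) = Obits ν i + if Odd (ν i) then 1 else 0 := by
  unfold Obits
  rw [Finset.range_add_one, Finset.filter_insert]
  by_cases h : Odd (ν i) <;>
    simp [h, Finset.card_insert_of_notMem]

lemma Obits_succ' (ν : ℕ → ℕ) (i : ℕ) :
    Obits ν (i+1) = Obits ν i + ν i % 2 := by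
  rw [Obits_succ]
  rcases Nat.even_or_odd (ν i) with h | h
  · rw [if_neg (by simp [Nat.not_odd_iff_even, h]), Nat.even_iff.mp h]
  · rw [if_pos h, Nat.odd_iff.mp h]

lemma F_lb (ν : ℕ → ℕ) (i : ℕ) : ν i / 2 ≤ F ν i := Nat.le_add_right _ _

lemma F_ub (ν : ℕ → ℕ) (i : ℕ) : F ν i ≤ (ν i + 1) / 2 := by
  unfold F
  rcases Nat.mod_two_eq_zero_or_one (Obits ν i) with h | h <;> rw [h] <;> omega

/-- state bit of the inverse map -/
def pbit (l : ℕ → ℕ) : ℕ → Bool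
  | 0 => false
  | (i+1) => !pbit l i && (l (i+1) == l i + 1)

/-- the inverse map -/
def U (l : ℕ → ℕ) (i : ℕ) : ℕ :=
  if pbit l i then 2 * l i - 1
  else if l (i+1) = l i + 1 then 2 * l i + 1 else 2 * l i

lemma pbit_succ_eq (l : ℕ → ℕ) (i : ℕ) :
    pbit l (i+1) = (!pbit l i && (l (i+1) == l i + 1)) := rfl

lemma pbit_succ {l : ℕ → ℕ} {i : ℕ} :
    pbit l (i+1) = true ↔ pbit l i = false ∧ l (i+1) = l i + 1 := by
  simp [pbit]

lemma pbit_pos {l : ℕ → ℕ} {i : ℕ} (h : pbit l i = true) : 1 ≤ l i := by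
  cases i with
  | zero => simp [pbit] at h
  | succ j => obtain ⟨_, h2⟩ := pbit_succ.mp h; omega

/-- Key counting lemma: if all entries at indices ≥ t are ≤ w and all odd entries
at indices < t are > w, then the number of odd entries below t is even. -/
lemma EC {ν : ℕ → ℕ} (hd : ∀ i, ν (i+1) ≤ ν i) {M : ℕ} (hz : ∀ m, M ≤ m → ν m = 0)
    (ho : OddPartsEvenMult ν) (t w : ℕ) (h1 : ∀ j, t ≤ j → ν j ≤ w)
    (h2 : ∀ j, j < t → Odd (ν j) → w < ν j) : Even (Obits ν t) := by
  classical
  unfold Obits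
  set s := (Finset.range t).filter (fun j => Odd (ν j)) with hs
  rw [Finset.card_eq_sum_card_fiberwise (f := ν) (t := s.image ν)
    (fun x hx => Finset.mem_image_of_mem _ hx)]
  apply Finset.even_sum
  intro c hc
  obtain ⟨j0, hj0, hj0c⟩ := Finset.mem_image.mp hc
  rw [hs, Finset.mem_filter, Finset.mem_range] at hj0
  have hcodd : Odd c := hj0c ▸ hj0.2
  have hcw : w < c := hj0c ▸ h2 j0 hj0.1 hj0.2
  have hfin : {i | ν i = c}.Finite := by
    have hc1 : c % 2 = 1 := Nat.odd_iff.mp hcodd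
    apply Set.Finite.subset (Set.finite_Iio M)
    intro i hi
    simp only [Set.mem_setOf_eq] at hi
    simp only [Set.mem_Iio]
    by_contra h
    push_neg at h
    have := hz i h
    omega
  have : Finset.filter (fun a => ν a = c) s = hfin.toFinset := by
    ext j
    simp only [hs, Finset.filter_filter, Finset.mem_filter, Finset.mem_range,
      Set.Finite.mem_toFinset, Set.mem_setOf_eq]
    constructor
    · tauto
    · intro hj
      have hjt : j < t := by
        by_contra h
        push_neg at h
        have := h1 j h
        have hc1 : c % 2 = 1 := Nat.odd_iff.mp hcodd
        omega
      exact ⟨hjt, hj ▸ hcodd, hj⟩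
  rw [this, ← Set.ncard_eq_toFinset_card _ hfin]
  exact ho c hcodd


section Main
variable {ν : ℕ → ℕ} {M : ℕ} (hd : ∀ i, ν (i+1) ≤ ν i) (hz : ∀ m, M ≤ m → ν m = 0)
  (ho : OddPartsEvenMult ν)

include hd hz ho

/-- if ν i is even then the number of odd entries before i is even. -/
lemma Qlem (i : ℕ) (h : ν i % 2 = 0) : Even (Obits ν i) := by
  apply EC hd hz ho i (ν i)
  · exact fun j hj => mono hd i j hj
  · intro j hj hodd
    have h1 := mono hd j i (by omega)
    have h2 := Nat.odd_iff.mp hodd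
    omega

/-- if ν i is odd and the odd-count before i is even, the run continues. -/
lemma Rlem (i : ℕ) (h : ν i % 2 = 1) (h2 : Even (Obits ν i)) : ν (i+1) = ν i := by
  by_contra hne
  have hlt : ν (i+1) < ν i := lt_of_le_of_ne (hd i) hne
  have : Even (Obits ν (i+1)) := by
    apply EC hd hz ho (i+1) (ν (i+1))
    · exact fun j hj => mono hd (i+1) j hj
    · intro j hj _
      have := mono hd j i (by omega)
      omega
  rw [Obits_succ, if_pos (Nat.odd_iff.mpr h)] at this
  rw [Nat.even_iff] at this h2
  omega

omit hd hz ho in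
lemma obits_run {s i : ℕ} (hsi : s ≤ i) (hrun : ∀ j, s ≤ j → j ≤ i → ν j = ν i)
    (hoddv : ν i % 2 = 1) : Obits ν i % 2 = (Obits ν s + (i - s)) % 2 := by
  induction i with
  | zero => simp_all
  | succ n ih =>
    rcases Nat.lt_or_ge s (n+1) with h' | h'
    · have hsn : s ≤ n := by omega
      have hνn : ν n = ν (n+1) := hrun n hsn (by omega)
      have : Obits ν n % 2 = (Obits ν s + (n - s)) % 2 := by
        apply ih hsn
        · intro j h1 h2
          rw [hrun j h1 (by omega), hνn]
        · omega
      rw [Obits_succ, if_pos (Nat.odd_iff.mpr (by omega))]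
      omega
    · have : s = n + 1 := le_antisymm hsi h'
      simp [this]

lemma T2_eq_F (i : ℕ) : T2 ν i = F ν i := by
  unfold T2 F
  by_cases h0 : ν i = 0
  · simp [h0]
  rw [if_neg h0]
  by_cases h2 : ν i % 2 = 0
  · simp [h2]
  · have hodd : ν i % 2 = 1 := by omega
    rw [if_neg h2]
    -- the string start
    set s := strStart ν i with hs
    have hne : ({j | ν j = ν i} : Set ℕ).Nonempty := ⟨i, rfl⟩
    have hmem : s ∈ {j | ν j = ν i} := Nat.sInf_mem hne
    have hsi : s ≤ i := Nat.sInf_le (by exact rfl)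
    have hνs : ν s = ν i := hmem
    have hrun : ∀ j, s ≤ j → j ≤ i → ν j = ν i := by
      intro j h1 h2
      have := mono hd s j h1
      have := mono hd j i h2
      omega
    have hOs : Even (Obits ν s) := by
      apply EC hd hz ho s (ν i)
      · intro j hj; have := mono hd s j hj; omega
      · intro j hj hjo
        have h3 := mono hd j i (by omega)
        have h4 : j ∉ {j | ν j = ν i} := Nat.notMem_of_lt_sInf hj
        simp only [Set.mem_setOf_eq] at h4
        omega
    have := obits_run hsi hrun hodd
    rw [Nat.even_iff] at hOs
    by_cases hp : (i - s) % 2 = 0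
    · rw [if_pos hp, hodd, one_mul]; omega
    · rw [if_neg hp, hodd, one_mul]; omega

lemma pbit_F (i : ℕ) : pbit (F ν) i = decide (Obits ν i % 2 = 1) := by
  induction i with
  | zero => simp [pbit, Obits]
  | succ n ih =>
    have hOsucc := Obits_succ' ν n
    show (!pbit (F ν) n && (F ν (n+1) == F ν n + 1)) = _
    rw [ih]
    rcases Nat.mod_two_eq_zero_or_one (ν n) with hv | hv
    · -- ν n even
      have hOn : Obits ν n % 2 = 0 := Nat.even_iff.mp (Qlem hd hz ho n hv)
      have hnext : F ν (n+1) ≤ F ν n := by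
        have h1 := F_ub ν (n+1)
        have h2 := hd n
        have h3 := F_lb ν n
        omega
      have hO1 : Obits ν (n+1) % 2 = 0 := by omega
      have hne : F ν (n+1) ≠ F ν n + 1 := by omega
      simp [hOn, hO1, hne]
    · -- ν n odd
      rcases Nat.mod_two_eq_zero_or_one (Obits ν n) with hOn | hOn
      · have hr : ν (n+1) = ν n := Rlem hd hz ho n hv (Nat.even_iff.mpr hOn)
        have hO1 : Obits ν (n+1) % 2 = 1 := by omega
        have hF1 : F ν (n+1) = F ν n + 1 := by
          unfold F
          rw [hr, hO1, hOn, hv]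
        simp [hOn, hO1, hF1]
      · have hO1 : Obits ν (n+1) % 2 = 0 := by omega
        simp [hOn, hO1]

lemma U_F (i : ℕ) : U (F ν) i = ν i := by
  rcases Nat.mod_two_eq_zero_or_one (Obits ν i) with hOn | hOn
  · have hp : pbit (F ν) i = false := by rw [pbit_F hd hz ho, hOn]; simp
    rcases Nat.mod_two_eq_zero_or_one (ν i) with hv | hv
    · -- ν i even : no trigger
      have hFi : F ν i = ν i / 2 := by unfold F; rw [hOn]; ring_nf
      have hnext : F ν (i+1) ≤ F ν i := by
        have h1 := F_ub ν (i+1)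
        have h2 := hd i
        omega
      have hne : ¬ F ν (i+1) = F ν i + 1 := by omega
      simp only [U, hp, Bool.false_eq_true, if_false, if_neg hne]
      omega
    · -- ν i odd : run continues, trigger
      have hr : ν (i+1) = ν i := Rlem hd hz ho i hv (Nat.even_iff.mpr hOn)
      have hO1 : Obits ν (i+1) % 2 = 1 := by
        rw [Obits_succ']; omega
      have hFi : F ν i = ν i / 2 := by unfold F; rw [hOn]; ring_nf
      have hF1 : F ν (i+1) = F ν i + 1 := by
        unfold F; rw [hr, hO1, hOn, hv]
      simp only [U, hp, Bool.false_eq_true, if_false, if_pos hF1]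
      omega
  · have hp : pbit (F ν) i = true := by rw [pbit_F hd hz ho, hOn]; simp
    have hv : ν i % 2 = 1 := by
      rcases Nat.mod_two_eq_zero_or_one (ν i) with hv | hv
      · have := Nat.even_iff.mp (Qlem hd hz ho i hv); omega
      · exact hv
    have hFi : F ν i = ν i / 2 + 1 := by unfold F; rw [hOn, hv]
    simp only [U, hp, if_true]
    omega

lemma F_step2 (i : ℕ) : F ν (i+2) ≤ F ν i := by
  have h2 : ν (i+2) ≤ ν i := le_trans (hd (i+1)) (hd i)
  rcases Nat.lt_or_ge (ν (i+2)) (ν i) with hlt | hge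
  · have h1 := F_ub ν (i+2)
    have h3 := F_lb ν i
    omega
  · have hνeq : ν (i+2) = ν i := by omega
    have hν1 : ν (i+1) = ν i := by
      have h4 : ν (i+1+1) ≤ ν (i+1) := hd (i+1)
      have h5 := hd i
      have h6 : ν (i+1+1) = ν (i+2) := rfl
      omega
    have hOeq : Obits ν (i+2) % 2 = Obits ν i % 2 := by
      rw [Obits_succ', Obits_succ', hν1]; omega
    unfold F
    rw [hνeq, hOeq]

omit hz ho in
lemma F_step1 (i : ℕ) : F ν (i+1) ≤ F ν i + 1 := by
  have h1 := F_ub ν (i+1)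
  have h2 := hd i
  have h3 := F_lb ν i
  omega

end Main

section Back
variable {l : ℕ → ℕ} {M : ℕ}

lemma U_zero (hz : ∀ m, M ≤ m → l m = 0) (i : ℕ) (hi : M + 1 ≤ i) :
    pbit l i = false ∧ U l i = 0 := by
  obtain ⟨j, rfl⟩ : ∃ j, i = j + 1 := ⟨i - 1, by omega⟩
  have h1 : l (j+1) = 0 := hz _ (by omega)
  have h2 : l (j+1+1) = 0 := hz _ (by omega)
  have hp : pbit l (j+1) = false := by
    rw [pbit_succ_eq, h1]; simp
  refine ⟨hp, ?_⟩
  simp [U, hp, h1, h2]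

lemma U_dec (hb : ∀ i, l (i+2) ≤ l i) (he : ∀ i, l (i+1) ≤ l i + 1) (i : ℕ) :
    U l (i+1) ≤ U l i := by
  cases hp : pbit l i with
  | true =>
    cases i with
    | zero => simp [pbit] at hp
    | succ j =>
      obtain ⟨hpj, hlj⟩ := pbit_succ.mp hp
      have hp1 : pbit l (j+1+1) = false := by rw [pbit_succ_eq, hp]; simp
      have h1 : l (j+2) ≤ l j := hb j
      have h2 : l (j+1+1) = l (j+2) := rfl
      simp only [U, hp, if_true, hp1, Bool.false_eq_true, if_false]
      split <;> omega
  | false =>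
    by_cases ht : l (i+1) = l i + 1
    · have hp1 : pbit l (i+1) = true := pbit_succ.mpr ⟨hp, ht⟩
      simp only [U, hp, Bool.false_eq_true, if_false, hp1, if_true, if_pos ht]
      omega
    · have hp1 : pbit l (i+1) = false := by rw [pbit_succ_eq, hp]; simp [ht]
      have h1 := hb i
      have h2 := he i
      have h3 : l (i+1+1) = l (i+2) := rfl
      simp only [U, hp, Bool.false_eq_true, if_false, hp1, if_neg ht]
      split <;> omega

lemma U_sum (l : ℕ → ℕ) (n : ℕ) :
    ∑ i ∈ Finset.range n, U l i
      = 2 * ∑ i ∈ Finset.range n, l i + (if pbit l n then 1 else 0) := by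
  induction n with
  | zero => simp [pbit]
  | succ n ih =>
    rw [Finset.sum_range_succ, Finset.sum_range_succ, ih]
    cases hp : pbit l n with
    | true =>
      have hp1 : pbit l (n+1) = false := by rw [pbit_succ_eq, hp]; simp
      have hl := pbit_pos hp
      simp only [U, hp, if_true, hp1, Bool.false_eq_true, if_false]
      omega
    | false =>
      by_cases ht : l (n+1) = l n + 1
      · have hp1 : pbit l (n+1) = true := pbit_succ.mpr ⟨hp, ht⟩
        simp only [U, hp, Bool.false_eq_true, if_false, hp1, if_true, if_pos ht]
        omega
      · have hp1 : pbit l (n+1) = false := by rw [pbit_succ_eq, hp]; simp [ht]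
        simp only [U, hp, Bool.false_eq_true, if_false, hp1, if_neg ht]
        omega

lemma pbit_U (i : ℕ) : Obits (U l) i % 2 = (if pbit l i then 1 else 0) := by
  induction i with
  | zero => simp [Obits, pbit]
  | succ i ih =>
    rw [Obits_succ']
    cases hp : pbit l i with
    | true =>
      have hp1 : pbit l (i+1) = false := by rw [pbit_succ_eq, hp]; simp
      have hl := pbit_pos hp
      have hU : U l i = 2 * l i - 1 := by simp [U, hp]
      rw [hp1, hU]
      rw [hp] at ih
      simp only [if_true] at ih
      simp only [Bool.false_eq_true, if_false]
      omega
    | false =>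
      rw [hp] at ih
      simp only [Bool.false_eq_true, if_false] at ih
      by_cases ht : l (i+1) = l i + 1
      · have hp1 : pbit l (i+1) = true := pbit_succ.mpr ⟨hp, ht⟩
        have hU : U l i = 2 * l i + 1 := by simp [U, hp, ht]
        rw [hp1, hU]
        simp only [if_true]
        omega
      · have hp1 : pbit l (i+1) = false := by rw [pbit_succ_eq, hp]; simp [ht]
        have hU : U l i = 2 * l i := by simp [U, hp, ht]
        rw [hp1, hU]
        simp only [Bool.false_eq_true, if_false]
        omega

lemma F_U (i : ℕ) : F (U l) i = l i := by
  unfold F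
  rw [pbit_U]
  cases hp : pbit l i with
  | true =>
    have hl := pbit_pos hp
    have hU : U l i = 2 * l i - 1 := by simp [U, hp]
    rw [hU]
    simp only [if_true]
    omega
  | false =>
    simp only [Bool.false_eq_true, if_false, Nat.mul_zero, Nat.add_zero]
    by_cases ht : l (i+1) = l i + 1
    · have hU : U l i = 2 * l i + 1 := by simp [U, hp, ht]
      rw [hU]; omega
    · have hU : U l i = 2 * l i := by simp [U, hp, ht]
      rw [hU]; omega

lemma opem_U (hz : ∀ m, M ≤ m → l m = 0) : OddPartsEvenMult (U l) := by
  intro c hc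
  have hc1 : c % 2 = 1 := Nat.odd_iff.mp hc
  set T : Set ℕ := {i | pbit l i = false ∧ l (i+1) = l i + 1 ∧ U l i = c} with hT
  have key : {i | U l i = c} = T ∪ (fun i => i + 1) '' T := by
    ext i
    simp only [hT, Set.mem_setOf_eq, Set.mem_union, Set.mem_image]
    constructor
    · intro hi
      cases hp : pbit l i with
      | false =>
        left
        refine ⟨rfl, ?_, hi⟩
        by_contra ht
        have : U l i = 2 * l i := by simp [U, hp, ht]
        omega
      | true =>
        right
        cases i with
        | zero => simp [pbit] at hp
        | succ j =>
          obtain ⟨hpj, hlj⟩ := pbit_succ.mp hp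
          have h1 : U l (j+1) = 2 * l (j+1) - 1 := by simp [U, hp]
          have h2 : U l j = 2 * l j + 1 := by simp [U, hpj, hlj]
          exact ⟨j, ⟨hpj, hlj, by omega⟩, rfl⟩
    · rintro (⟨hp, ht, hU⟩ | ⟨j, ⟨hp, ht, hU⟩, rfl⟩)
      · exact hU
      · have hp1 : pbit l (j+1) = true := pbit_succ.mpr ⟨hp, ht⟩
        have h1 : U l (j+1) = 2 * l (j+1) - 1 := by simp [U, hp1]
        have h2 : U l j = 2 * l j + 1 := by simp [U, hp, ht]
        omega
  have hTfin : T.Finite := by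
    apply Set.Finite.subset (Set.finite_Iio (M+1))
    intro i hi
    simp only [hT, Set.mem_setOf_eq] at hi
    simp only [Set.mem_Iio]
    by_contra h
    push_neg at h
    have := (U_zero hz i (by omega)).2
    omega
  have himg : ((fun i => i + 1) '' T).Finite := hTfin.image _
  have hdisj : Disjoint T ((fun i => i + 1) '' T) := by
    rw [Set.disjoint_left]
    rintro a ⟨hp, -, -⟩ ⟨j, ⟨hpj, htj, -⟩, rfl⟩
    have : pbit l (j+1) = true := pbit_succ.mpr ⟨hpj, htj⟩
    rw [hp] at this
    exact Bool.false_ne_true this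
  rw [key, Set.ncard_union_eq hdisj hTfin himg,
    Set.ncard_image_of_injective _ (fun a b h => by omega)]
  exact ⟨_, rfl⟩

end Back

end Zaux

open Zaux in
/-- 3.4(a): for even N, the substitution is a bijection from Z¹_N (partitions of N
in which every odd part occurs an even number of times) onto BP^{N/2}_{1,1}. -/
theorem Z1_bij_BP11 (N : ℕ) (hN : Even N) :
    Set.BijOn T2
      {ν | IsPartitionSeq ν ∧ SumsTo ν N ∧ OddPartsEvenMult ν}
      {l | IsBipartition l ∧ SumsTo l (N / 2) ∧ HasExcess 1 1 l} := by
  obtain ⟨K, hK⟩ := hN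
  refine ⟨?_, ?_, ?_⟩
  · -- MapsTo
    rintro ν ⟨⟨-, hd⟩, ⟨M0, hz0, hsum⟩, ho⟩
    have hT2 : T2 ν = F ν := funext (T2_eq_F hd hz0 ho)
    rw [Set.mem_setOf_eq, hT2]
    have hlz : ∀ m, M0 ≤ m → F ν m = 0 := by
      intro m hm; unfold F; rw [hz0 m hm]; simp
    refine ⟨⟨⟨M0, hlz⟩, fun i => F_step2 hd hz0 ho i⟩, ?_, ?_⟩
    · refine ⟨M0 + 1, fun m hm => hlz m (by omega), ?_⟩
      have h1 := U_sum (F ν) (M0 + 1)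
      have h3 : (∑ i ∈ Finset.range (M0+1), U (F ν) i)
          = ∑ i ∈ Finset.range (M0+1), ν i :=
        Finset.sum_congr rfl (fun i _ => U_F hd hz0 ho i)
      have h4 : ∑ i ∈ Finset.range (M0+1), ν i = N := by
        rw [Finset.sum_range_succ, hsum, hz0 M0 le_rfl]
        omega
      have h5 : pbit (F ν) (M0+1) = false := (U_zero hlz (M0+1) le_rfl).1
      rw [h5] at h1
      simp only [Bool.false_eq_true, if_false, add_zero] at h1
      omega
    · intro i
      exact ⟨fun _ => F_step1 hd i, fun _ => F_step1 hd i⟩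
  · -- InjOn
    rintro ν ⟨⟨-, hd⟩, ⟨M0, hz0, -⟩, ho⟩ ν' ⟨⟨-, hd'⟩, ⟨M0', hz0', -⟩, ho'⟩ h
    funext i
    have e1 : U (T2 ν) i = ν i := by
      rw [funext (T2_eq_F hd hz0 ho)]; exact U_F hd hz0 ho i
    have e2 : U (T2 ν') i = ν' i := by
      rw [funext (T2_eq_F hd' hz0' ho')]; exact U_F hd' hz0' ho' i
    rw [← e1, ← e2, h]
  · -- SurjOn
    rintro l ⟨⟨-, hb⟩, ⟨M0, hz0, hsum⟩, hex⟩
    have he : ∀ i, l (i+1) ≤ l i + 1 := by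
      intro i
      rcases Nat.even_or_odd i with h | h
      exacts [(hex i).1 h, (hex i).2 h]
    have hd : ∀ i, U l (i+1) ≤ U l i := U_dec hb he
    have hzν : ∀ m, M0 + 1 ≤ m → U l m = 0 := fun m hm => (U_zero hz0 m hm).2
    have hoν : OddPartsEvenMult (U l) := opem_U hz0
    refine ⟨U l, ⟨⟨⟨M0+1, hzν⟩, hd⟩, ⟨M0+1, hzν, ?_⟩, hoν⟩, ?_⟩
    · have h1 := U_sum l (M0+1)
      have h4 : ∑ i ∈ Finset.range (M0+1), l i = N / 2 := by
        rw [Finset.sum_range_succ, hsum, hz0 M0 le_rfl]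
        omega
      have h5 : pbit l (M0+1) = false := (U_zero hz0 (M0+1) le_rfl).1
      rw [h5] at h1
      simp only [Bool.false_eq_true, if_false, add_zero] at h1
      omega
    · funext i
      rw [T2_eq_F hd hzν hoν i]
      exact F_U i
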